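/- Let M be a compact Riemannian manifold with C² boundary and outward unit normal n̂, and let u be a Neumann p-Laplacian eigenfunction, smooth near a boundary point x̄ where ∇u(x̄) ≠ 0. Suppose x̄ is a maximum point of F := |∇u|^p - ψ∘u for a C¹ function ψ : ℝ → ℝ. If the second fundamental form of ∂M is nonnegative (convex boundary), then ∇F(x̄) = 0. -/

import Mathlib

open Topology Filter Set

noncomputable section

/-- The Hessian `H_f(x)(v,w)` of `f` at `x`, as the derivative of the gradient. -/
def hess {n : ℕ} (f : EuclideanSpace ℝ (Fin n) → ℝ) (x v w : EuclideanSpace ℝ (Fin n)) : ℝ :=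
  inner ℝ (fderiv ℝ (gradient f) x v) w

/-- The divergence of a vector field on Euclidean space. -/
def divg {n : ℕ} (X : EuclideanSpace ℝ (Fin n) → EuclideanSpace ℝ (Fin n))
    (x : EuclideanSpace ℝ (Fin n)) : ℝ :=
  ∑ i : Fin n, inner ℝ (fderiv ℝ X x (EuclideanSpace.single i (1:ℝ)))
      (EuclideanSpace.single i (1:ℝ))

/-- The Laplacian `Δf = div ∇f`. -/
def lapl {n : ℕ} (f : EuclideanSpace ℝ (Fin n) → ℝ) (x : EuclideanSpace ℝ (Fin n)) : ℝ :=
  divg (gradient f) x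

/-- The `p`-Laplacian `Δ_p f = div(|∇f|^{p-2}∇f)`. -/
def plap {n : ℕ} (p : ℝ) (f : EuclideanSpace ℝ (Fin n) → ℝ)
    (x : EuclideanSpace ℝ (Fin n)) : ℝ :=
  divg (fun y => ‖gradient f y‖ ^ (p-2) • gradient f y) x

/-- `A_u = H_u(∇u,∇u)/|∇u|²`. -/
def Au {n : ℕ} (f : EuclideanSpace ℝ (Fin n) → ℝ) (x : EuclideanSpace ℝ (Fin n)) : ℝ :=
  hess f x (gradient f x) (gradient f x) / ‖gradient f x‖ ^ 2

/-- The squared Hilbert–Schmidt norm `|H_u|²` of the Hessian. -/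
def hessNormSq {n : ℕ} (f : EuclideanSpace ℝ (Fin n) → ℝ)
    (x : EuclideanSpace ℝ (Fin n)) : ℝ :=
  ∑ i : Fin n, ∑ j : Fin n,
    (hess f x (EuclideanSpace.single i (1:ℝ)) (EuclideanSpace.single j (1:ℝ))) ^ 2

/-- The second order part `P_u^{II}` of the linearized `p`-Laplacian:
`P_u^{II}(η) = |∇u|^{p-2}Δη + (p-2)|∇u|^{p-4}H_η(∇u,∇u)`. -/
def PII {n : ℕ} (p : ℝ) (u η : EuclideanSpace ℝ (Fin n) → ℝ)
    (x : EuclideanSpace ℝ (Fin n)) : ℝ :=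
  ‖gradient u x‖ ^ (p-2) * lapl η x
    + (p-2) * ‖gradient u x‖ ^ (p-4) * hess η x (gradient u x) (gradient u x)

/-- The Ricci curvature of flat Euclidean space (identically zero). -/
def ricci {n : ℕ} (x v w : EuclideanSpace ℝ (Fin n)) : ℝ := 0

/-- Signed power: `spow x q = |x|^q · sign x`, so `x^{(p-1)} = spow x (p-1)`. -/
def spow (x q : ℝ) : ℝ := Real.sign x * |x| ^ q

section Aux
variable {n : ℕ}
local notation "E" => EuclideanSpace ℝ (Fin n)

lemma vec_decomp (w : E) : w = ∑ i, w i • EuclideanSpace.single i (1:ℝ) := by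
  have := (EuclideanSpace.basisFun (Fin n) ℝ).sum_repr w
  simp only [EuclideanSpace.basisFun_repr, EuclideanSpace.basisFun_apply] at this
  exact this.symm

lemma clm_decomp (L : E →L[ℝ] ℝ) (w : E) : L w = ∑ i, w i * L (EuclideanSpace.single i 1) := by
  conv_lhs => rw [vec_decomp w]
  simp [map_sum]

lemma aux_grad_eq (f : E → ℝ) (y : E) :
    gradient f y = ∑ i, (fderiv ℝ f y (EuclideanSpace.single i 1)) • EuclideanSpace.single i (1:ℝ) := by
  apply ext_inner_right ℝ
  intro w
  rw [gradient, InnerProductSpace.toDual_symm_apply, sum_inner]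
  simp only [real_inner_smul_left, EuclideanSpace.inner_single_left, RCLike.conj_to_real, one_mul]
  rw [clm_decomp (fderiv ℝ f y) w]
  exact Finset.sum_congr rfl fun i _ => mul_comm _ _

lemma aux_contDiffAt_gradient {f : E → ℝ} {x : E} (hf : ContDiffAt ℝ 2 f x) :
    ContDiffAt ℝ 1 (gradient f) x := by
  have hfd : ContDiffAt ℝ 1 (fderiv ℝ f) x := hf.fderiv_right (le_refl 2)
  have : ContDiffAt ℝ 1 (fun y => ∑ i, (fderiv ℝ f y (EuclideanSpace.single i 1)) •
      EuclideanSpace.single i (1:ℝ)) x := by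
    apply ContDiffAt.sum
    intro i _
    exact (hfd.clm_apply contDiffAt_const).smul contDiffAt_const
  exact this.congr_of_eventuallyEq (Filter.Eventually.of_forall fun y => aux_grad_eq f y)

lemma aux_hasFDerivAt_gradient {f : E → ℝ} {x : E} (hf : ContDiffAt ℝ 2 f x) :
    HasFDerivAt (gradient f) (fderiv ℝ (gradient f) x) x :=
  ((aux_contDiffAt_gradient hf).differentiableAt one_ne_zero).hasFDerivAt

lemma aux_hess_eq {f : E → ℝ} {x : E} (hf : ContDiffAt ℝ 2 f x) (v w : E) :
    hess f x v w = fderiv ℝ (fderiv ℝ f) x v w := by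
  have hG := aux_hasFDerivAt_gradient hf
  have h1 : HasFDerivAt (fun y => (inner ℝ w (gradient f y) : ℝ))
      ((innerSL ℝ w).comp (fderiv ℝ (gradient f) x)) x :=
    ((innerSL ℝ w).hasFDerivAt).comp x hG
  have heq : (fun y => (inner ℝ w (gradient f y) : ℝ)) = fun y => fderiv ℝ f y w := by
    funext y
    rw [real_inner_comm, gradient, InnerProductSpace.toDual_symm_apply]
  rw [heq] at h1
  have hfd : DifferentiableAt ℝ (fderiv ℝ f) x :=
    (hf.fderiv_right (le_refl 2)).differentiableAt one_ne_zero
  have h2 : HasFDerivAt (fun y => fderiv ℝ f y w)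
      ((fderiv ℝ (fderiv ℝ f) x).flip w) x := by
    have := hfd.hasFDerivAt.clm_apply (hasFDerivAt_const w x)
    simpa using this
  have h3 := ContinuousLinearMap.ext_iff.mp (h1.unique h2) v
  rw [hess, real_inner_comm]
  simpa using h3

lemma aux_hess_symm {f : E → ℝ} {x : E} (hf : ContDiffAt ℝ 2 f x) (v w : E) :
    hess f x v w = hess f x w v := by
  rw [aux_hess_eq hf, aux_hess_eq hf]
  exact (hf.isSymmSndFDerivAt (by simp [minSmoothness_of_isRCLikeNormedField])) v w

lemma norm_rpow_inner (p : ℝ) (hp : 0 < p) (y : E) : ‖y‖ ^ p = (inner ℝ y y : ℝ) ^ (p/2) := by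
  rw [real_inner_self_eq_norm_sq, ← Real.rpow_natCast ‖y‖ 2, ← Real.rpow_mul (norm_nonneg y)]
  norm_num
  ring_nf

lemma inner_rpow_eq (p : ℝ) {v : E} : ((inner ℝ v v : ℝ)) ^ (p/2 - 1) = ‖v‖ ^ (p - 2) := by
  rw [real_inner_self_eq_norm_sq, ← Real.rpow_natCast ‖v‖ 2, ← Real.rpow_mul (norm_nonneg v)]
  congr 1
  ring

end Aux

set_option maxHeartbeats 1000000 in
/-- let `Ω = {g ≤ 0}` be a compact domain with `C²` boundary
`{g = 0}` (outward normal `∇g/|∇g|`), convex in the sense that the second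
fundamental form is nonnegative (`H_g ≥ 0` on tangent vectors).  Let `u` be a
Neumann `p`-Laplacian eigenfunction, smooth near a boundary point `x̄` with
`∇u(x̄) ≠ 0`, and suppose `x̄` maximizes `F = |∇u|^p - ψ∘u` on `Ω` for a `C¹`
function `ψ`.  Then `∇F(x̄) = 0`. -/
theorem stmt16 {n : ℕ} (hn : 2 ≤ n) (p lam : ℝ) (hp : 1 < p) (hlam : 0 < lam)
    (g : EuclideanSpace ℝ (Fin n) → ℝ) (hg : ContDiff ℝ 2 g)
    (Ω : Set (EuclideanSpace ℝ (Fin n))) (hΩ : Ω = {x | g x ≤ 0})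
    (hcomp : IsCompact Ω)
    (hreg : ∀ x, g x = 0 → gradient g x ≠ 0)
    (hconv : ∀ x, g x = 0 → ∀ X : EuclideanSpace ℝ (Fin n),
        (inner ℝ X (gradient g x) : ℝ) = 0 → 0 ≤ hess g x X X)
    (u : EuclideanSpace ℝ (Fin n) → ℝ)
    (xb : EuclideanSpace ℝ (Fin n)) (hxb : g xb = 0)
    (U : Set (EuclideanSpace ℝ (Fin n))) (hU : IsOpen U) (hxbU : xb ∈ U)
    (hu : ContDiffOn ℝ 2 u U)
    (hgradu : gradient u xb ≠ 0)
    (heig : ∀ x ∈ U, g x < 0 → plap p u x = -lam * spow (u x) (p-1))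
    (hneum : ∀ x, g x = 0 → (inner ℝ (gradient u x) (gradient g x) : ℝ) = 0)
    (ψ : ℝ → ℝ) (hψ : ContDiff ℝ 1 ψ)
    (hmax : ∀ x ∈ Ω, ‖gradient u x‖ ^ p - ψ (u x) ≤ ‖gradient u xb‖ ^ p - ψ (u xb)) :
    gradient (fun x => ‖gradient u x‖ ^ p - ψ (u x)) xb = 0 := by
  set F : EuclideanSpace ℝ (Fin n) → ℝ := fun x => ‖gradient u x‖ ^ p - ψ (u x) with hFdef
  set v : EuclideanSpace ℝ (Fin n) := gradient u xb with hv
  set G : EuclideanSpace ℝ (Fin n) := gradient g xb with hG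
  set Hu : EuclideanSpace ℝ (Fin n) →L[ℝ] EuclideanSpace ℝ (Fin n) := fderiv ℝ (gradient u) xb with hHu
  set Hg : EuclideanSpace ℝ (Fin n) →L[ℝ] EuclideanSpace ℝ (Fin n) := fderiv ℝ (gradient g) xb with hHg
  have hu2 : ContDiffAt ℝ 2 u xb := hu.contDiffAt (hU.mem_nhds hxbU)
  have hg2 : ContDiffAt ℝ 2 g xb := hg.contDiffAt
  have hGne : G ≠ 0 := hreg xb hxb
  have hGG : (0:ℝ) < inner ℝ G G := (by rw [real_inner_self_eq_norm_sq]; exact pow_pos (norm_pos_iff.mpr hGne) 2)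
  have hvv : (0:ℝ) < inner ℝ v v := (by rw [real_inner_self_eq_norm_sq]; exact pow_pos (norm_pos_iff.mpr hgradu) 2)
  have hvG : (inner ℝ v G : ℝ) = 0 := hneum xb hxb
  have hGu := aux_hasFDerivAt_gradient hu2
  have hGg := aux_hasFDerivAt_gradient hg2
  have hGu1 := aux_contDiffAt_gradient hu2
  have hGg1 := aux_contDiffAt_gradient hg2
  set Dg : EuclideanSpace ℝ (Fin n) →L[ℝ] ℝ := fderiv ℝ g xb with hDgdef
  have hDgs : HasStrictFDerivAt g Dg xb := hg2.hasStrictFDerivAt two_ne_zero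
  have hDg_apply : ∀ w : EuclideanSpace ℝ (Fin n), Dg w = (inner ℝ G w : ℝ) := fun w =>
    (InnerProductSpace.toDual_symm_apply (𝕜 := ℝ)).symm
  -- F rewritten via inner product
  have hFr : F = fun x => ((inner ℝ (gradient u x) (gradient u x) : ℝ)) ^ (p/2) - ψ (u x) := by
    funext x
    rw [hFdef]
    simp only [norm_rpow_inner p (lt_trans one_pos hp) (gradient u x)]
  have hrne : (inner ℝ v v : ℝ) ≠ 0 := ne_of_gt hvv
  -- C¹ smoothness of F at xb
  have hψu : ContDiffAt ℝ 1 (fun x => ψ (u x)) xb :=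
    (hψ.contDiffAt).comp xb (hu2.of_le one_le_two)
  have hF1 : ContDiffAt ℝ 1 F xb := by
    rw [hFr]
    exact ((hGu1.inner ℝ hGu1).rpow_const_of_ne hrne).sub hψu
  -- explicit derivative of F
  set R : EuclideanSpace ℝ (Fin n) →L[ℝ] ℝ := (fderivInnerCLM ℝ (v, v)).comp (Hu.prod Hu) with hRdef
  have hr : HasFDerivAt (fun y => (inner ℝ (gradient u y) (gradient u y) : ℝ)) R xb :=
    hGu.inner ℝ hGu
  have hN : HasFDerivAt (fun x => ((inner ℝ (gradient u x) (gradient u x) : ℝ)) ^ (p/2))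
      ((p/2 * (inner ℝ v v : ℝ) ^ (p/2 - 1)) • R) xb := hr.rpow_const (Or.inl hrne)
  have hudiff : DifferentiableAt ℝ u xb := hu2.differentiableAt two_ne_zero
  have hψd : HasFDerivAt (fun y => ψ (u y)) (deriv ψ (u xb) • fderiv ℝ u xb) xb :=
    ((hψ.differentiable one_ne_zero (u xb)).hasDerivAt).comp_hasFDerivAt xb hudiff.hasFDerivAt
  set Φ : EuclideanSpace ℝ (Fin n) →L[ℝ] ℝ :=
    (p/2 * (inner ℝ v v : ℝ) ^ (p/2 - 1)) • R - deriv ψ (u xb) • fderiv ℝ u xb with hΦdef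
  have hFd : HasFDerivAt F Φ xb := by
    rw [hFr]
    exact hN.sub hψd
  have hΦ_apply : ∀ w : EuclideanSpace ℝ (Fin n),
      Φ w = p * ‖v‖ ^ (p-2) * (inner ℝ (Hu w) v : ℝ) - deriv ψ (u xb) * (inner ℝ v w : ℝ) := by
    intro w
    have hDu : fderiv ℝ u xb w = (inner ℝ v w : ℝ) :=
      (InnerProductSpace.toDual_symm_apply (𝕜 := ℝ)).symm
    have : Φ w = (p/2 * (inner ℝ v v : ℝ) ^ (p/2 - 1)) *
        ((inner ℝ v (Hu w) : ℝ) + (inner ℝ (Hu w) v : ℝ)) - deriv ψ (u xb) * (inner ℝ v w : ℝ) := by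
      simp [hΦdef, hRdef, fderivInnerCLM_apply, hDu]
    rw [this, real_inner_comm v (Hu w), inner_rpow_eq p]
    ring
  -- Neumann / convexity step: hess u xb G v ≤ 0, hence Φ G ≤ 0
  have hΦG_le : Φ G ≤ 0 := by
    set h : EuclideanSpace ℝ (Fin n) → ℝ := fun x => (inner ℝ (gradient u x) (gradient g x) : ℝ) with hhdef
    have hh1 : ContDiffAt ℝ 1 h xb := hGu1.inner ℝ hGg1
    have hhd : HasFDerivAt h ((fderivInnerCLM ℝ (v, G)).comp (Hu.prod Hg)) xb :=
      hGu.inner ℝ hGg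
    have hhs : HasStrictFDerivAt h ((fderivInnerCLM ℝ (v, G)).comp (Hu.prod Hg)) xb := by
      have := hh1.hasStrictFDerivAt one_ne_zero
      rwa [hhd.fderiv] at this
    have hextr : IsLocalExtrOn h {x | g x = g xb} xb := by
      apply IsExtrOn.localize
      refine Or.inr (isMaxOn_iff.mpr fun x hx => ?_)
      have hx0 : g x = 0 := (Set.mem_setOf_eq ▸ hx).trans hxb
      simp only [hhdef]
      rw [hneum x hx0, hneum xb hxb]
    obtain ⟨a, b, hab, heq⟩ := hextr.exists_multipliers_of_hasStrictFDerivAt_1d hDgs hhs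
    have hb : b ≠ 0 := by
      intro hb0
      have ha : a ≠ 0 := by
        intro ha0
        exact hab (by simp [Prod.ext_iff, ha0, hb0])
      have := congrArg (fun (L : EuclideanSpace ℝ (Fin n) →L[ℝ] ℝ) => L G) heq
      simp only [ContinuousLinearMap.add_apply, ContinuousLinearMap.smul_apply,
        ContinuousLinearMap.zero_apply, smul_eq_mul, hb0, zero_mul, add_zero] at this
      rw [hDg_apply G] at this
      exact (ne_of_gt hGG) (by
        have := mul_eq_zero.mp this
        tauto)
    have hval : ((fderivInnerCLM ℝ (v, G)).comp (Hu.prod Hg)) v = 0 := by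
      have := congrArg (fun (L : EuclideanSpace ℝ (Fin n) →L[ℝ] ℝ) => L v) heq
      simp only [ContinuousLinearMap.add_apply, ContinuousLinearMap.smul_apply,
        ContinuousLinearMap.zero_apply, smul_eq_mul] at this
      have hGv0 : (inner ℝ G v : ℝ) = 0 := by rw [real_inner_comm]; exact hvG
      rw [hDg_apply v, hGv0, mul_zero, zero_add] at this
      exact (mul_eq_zero.mp this).resolve_left hb
    have hval' : (inner ℝ v (Hg v) : ℝ) + (inner ℝ (Hu v) G : ℝ) = 0 := by
      simpa [fderivInnerCLM_apply] using hval
    have hconvv : 0 ≤ hess g xb v v := hconv xb hxb v hvG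
    have hHgv : 0 ≤ (inner ℝ v (Hg v) : ℝ) := by
      rw [real_inner_comm]
      exact hconvv
    have hHuvG : (inner ℝ (Hu v) G : ℝ) ≤ 0 := by linarith
    have hsym : (inner ℝ (Hu G) v : ℝ) = (inner ℝ (Hu v) G : ℝ) := by
      have := aux_hess_symm hu2 G v
      simpa [hess] using this
    rw [hΦ_apply G, hvG, mul_zero, sub_zero, hsym]
    apply mul_nonpos_of_nonneg_of_nonpos _ hHuvG
    positivity
  -- one-sided derivative: 0 ≤ Φ G
  have hΦG_ge : 0 ≤ Φ G := by
    have hγ : HasDerivAt (fun t : ℝ => xb + t • (-G)) (-G) 0 := by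
      simpa using ((hasDerivAt_id (0:ℝ)).smul_const (-G)).const_add xb
    have hφg : HasDerivAt (fun t : ℝ => g (xb + t • (-G))) (Dg (-G)) 0 := by
      have hDg' : HasFDerivAt g Dg ((fun t : ℝ => xb + t • (-G)) 0) := by
        simpa using hDgs.hasFDerivAt
      exact hDg'.comp_hasDerivAt 0 hγ
    have hφF : HasDerivAt (fun t : ℝ => F (xb + t • (-G))) (Φ (-G)) 0 := by
      have hF' : HasFDerivAt F Φ ((fun t : ℝ => xb + t • (-G)) 0) := by
        simpa using hFd
      exact hF'.comp_hasDerivAt 0 hγ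
    have hDgneg : Dg (-G) < 0 := by
      rw [hDg_apply]
      rw [inner_neg_right]
      linarith
    have hmono : 𝓝[Set.Ioi (0:ℝ)] 0 ≤ 𝓝[{(0:ℝ)}ᶜ] 0 :=
      nhdsWithin_mono 0 (fun t ht => ne_of_gt ht)
    have hslopeg : Filter.Tendsto (slope (fun t : ℝ => g (xb + t • (-G))) 0)
        (𝓝[Set.Ioi (0:ℝ)] 0) (𝓝 (Dg (-G))) :=
      (hasDerivAt_iff_tendsto_slope.mp hφg).mono_left hmono
    have hev1 : ∀ᶠ t in 𝓝[Set.Ioi (0:ℝ)] 0,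
        slope (fun t : ℝ => g (xb + t • (-G))) 0 t < 0 :=
      hslopeg.eventually_lt_const hDgneg
    have hevF : ∀ᶠ t in 𝓝[Set.Ioi (0:ℝ)] 0,
        slope (fun t : ℝ => F (xb + t • (-G))) 0 t ≤ 0 := by
      filter_upwards [hev1, self_mem_nhdsWithin] with t hslopet ht
      have ht0 : (0:ℝ) < t := ht
      have hg0 : g (xb + (0:ℝ) • (-G)) = 0 := by simpa using hxb
      have hslope_eq : slope (fun t : ℝ => g (xb + t • (-G))) 0 t
          = g (xb + t • (-G)) / t := by
        rw [slope_def_field]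
        simp [hxb]
      have hgt : g (xb + t • (-G)) < 0 := by
        have := mul_neg_of_neg_of_pos (hslope_eq ▸ hslopet) ht0
        rwa [div_mul_cancel₀ _ (ne_of_gt ht0)] at this
      have hmem : xb + t • (-G) ∈ Ω := by
        rw [hΩ]
        exact le_of_lt hgt
      have hle : F (xb + t • (-G)) ≤ F xb := hmax _ hmem
      have hF0 : F (xb + (0:ℝ) • (-G)) = F xb := by norm_num
      rw [slope_def_field, hF0]
      apply div_nonpos_of_nonpos_of_nonneg
      · linarith
      · linarith
    have hslopeF : Filter.Tendsto (slope (fun t : ℝ => F (xb + t • (-G))) 0)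
        (𝓝[Set.Ioi (0:ℝ)] 0) (𝓝 (Φ (-G))) :=
      (hasDerivAt_iff_tendsto_slope.mp hφF).mono_left hmono
    have hneg : Φ (-G) ≤ 0 := le_of_tendsto hslopeF hevF
    have : Φ (-G) = -(Φ G) := by rw [map_neg]
    linarith [this ▸ hneg]
  have hΦG : Φ G = 0 := le_antisymm hΦG_le hΦG_ge
  -- Lagrange multipliers for F
  have hFs : HasStrictFDerivAt F Φ xb := by
    have := hF1.hasStrictFDerivAt one_ne_zero
    rwa [hFd.fderiv] at this
  have hextrF : IsLocalExtrOn F {x | g x = g xb} xb := by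
    apply IsExtrOn.localize
    refine Or.inr (isMaxOn_iff.mpr fun x hx => ?_)
    have hx0 : g x = 0 := (Set.mem_setOf_eq ▸ hx).trans hxb
    exact hmax x (by rw [hΩ]; exact le_of_eq hx0)
  obtain ⟨a, b, hab, heq⟩ := hextrF.exists_multipliers_of_hasStrictFDerivAt_1d hDgs hFs
  have hb : b ≠ 0 := by
    intro hb0
    have ha : a ≠ 0 := by
      intro ha0
      exact hab (by simp [Prod.ext_iff, ha0, hb0])
    have := congrArg (fun (L : EuclideanSpace ℝ (Fin n) →L[ℝ] ℝ) => L G) heq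
    simp only [ContinuousLinearMap.add_apply, ContinuousLinearMap.smul_apply,
      ContinuousLinearMap.zero_apply, smul_eq_mul, hb0, zero_mul, add_zero] at this
    rw [hDg_apply G] at this
    exact (ne_of_gt hGG) ((mul_eq_zero.mp this).resolve_left ha)
  have ha0 : a = 0 := by
    have := congrArg (fun (L : EuclideanSpace ℝ (Fin n) →L[ℝ] ℝ) => L G) heq
    simp only [ContinuousLinearMap.add_apply, ContinuousLinearMap.smul_apply,
      ContinuousLinearMap.zero_apply, smul_eq_mul] at this
    rw [hDg_apply G, hΦG, mul_zero, add_zero] at this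
    exact (mul_eq_zero.mp this).resolve_right (ne_of_gt hGG)
  have hΦ0 : Φ = 0 := by
    have : b • Φ = 0 := by
      have := heq
      rw [ha0, zero_smul, zero_add] at this
      exact this
    rcases smul_eq_zero.mp this with h | h
    · exact absurd h hb
    · exact h
  show gradient F xb = 0
  rw [gradient, hFd.fderiv, hΦ0]
  simp


end
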